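/- Let p be an odd prime and k a field of characteristic p. Let H = k[∂]/(∂^p) and for 0 ≤ i ≤ p−1 let U_i = k[∂]/(∂^{i+1}), viewed as H-modules. Equip U_{p−2} ⊗_k U_{p−2} with the H-module structure in which ∂ acts by ∂⊗1 + 1⊗∂. Then there is an isomorphism of H-modules U_{p−2} ⊗_k U_{p−2} ≅ U_0 ⊕ U_{p−1}^{⊕(p−2)}; that is, the tensor square of U_{p−2} decomposes as a one-dimensional trivial summand plus a free H-module of rank p−2. -/

import Mathlib

open TensorProduct

/-- The cyclic module `k[∂]/(∂^m)` (so `U_i = stmt15U k (i+1)`). -/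
abbrev stmt15U (k : Type*) [Field k] (m : ℕ) : Type _ :=
  Polynomial k ⧸ Ideal.span {(Polynomial.X : Polynomial k) ^ m}

/-- The action of `∂` on `k[∂]/(∂^m)`, i.e. multiplication by (the class of) `X`. -/
noncomputable def stmt15mulX (k : Type*) [Field k] (m : ℕ) :
    stmt15U k m →ₗ[k] stmt15U k m :=
  LinearMap.mulLeft k
    (Ideal.Quotient.mk (Ideal.span {(Polynomial.X : Polynomial k) ^ m}) Polynomial.X)

noncomputable section S15Aux

open Polynomial Module

namespace S15

variable {k : Type*} [Field k]

variable (k) in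
abbrev U (m : ℕ) : Type _ := AdjoinRoot ((X : k[X]) ^ m)

variable (k) in
def rt (m : ℕ) : U k m := AdjoinRoot.root (X ^ m)

lemma rt_pow_self (m : ℕ) : rt k m ^ m = 0 := by
  show (AdjoinRoot.root (X ^ m) : AdjoinRoot ((X : k[X]) ^ m)) ^ m = 0
  rw [← AdjoinRoot.mk_X, ← map_pow, AdjoinRoot.mk_self]

lemma rt_pow_of_le {m t : ℕ} (h : m ≤ t) : rt k m ^ t = 0 := by
  rw [← Nat.sub_add_cancel h, pow_add, rt_pow_self, mul_zero]

variable (k) in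
def bU (m : ℕ) : Basis (Fin m) k (U k m) :=
  (AdjoinRoot.powerBasis' (monic_X_pow (R := k) (n := m))).basis.reindex
    (finCongr (by simp))

lemma bU_apply (m : ℕ) (i : Fin m) : bU k m i = rt k m ^ (i : ℕ) := by
  simp only [bU, Basis.reindex_apply]
  rw [PowerBasis.basis_eq_pow]
  simp [rt]

lemma repr_rt_pow (m : ℕ) (u : ℕ) (a : Fin m) :
    (bU k m).repr (rt k m ^ u) a = if u = (a : ℕ) then 1 else 0 := by
  rcases lt_or_ge u m with hu | hu
  · have : rt k m ^ u = bU k m ⟨u, hu⟩ := (bU_apply m ⟨u, hu⟩).symm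
    rw [this, Basis.repr_self, Finsupp.single_apply]
    simp [Fin.ext_iff]
  · rw [rt_pow_of_le hu, map_zero]
    have : u ≠ (a : ℕ) := by have := a.isLt; omega
    simp [this]


section Tensor

variable (k) in
abbrev A (m : ℕ) : Type _ := U k m ⊗[k] U k m

variable (k) in
def xx (m : ℕ) : A k m := rt k m ⊗ₜ 1

variable (k) in
def yy (m : ℕ) : A k m := 1 ⊗ₜ rt k m

variable (k) in
def ss (m : ℕ) : A k m := xx k m + yy k m

lemma xy_pow_mul (m c d : ℕ) :
    xx k m ^ c * yy k m ^ d = (rt k m ^ c) ⊗ₜ (rt k m ^ d) := by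
  simp [xx, yy, Algebra.TensorProduct.tmul_pow, Algebra.TensorProduct.tmul_mul_tmul]

/-- binomial expansion -/
lemma ss_pow_mul_xx (m n j : ℕ) :
    ss k m ^ n * xx k m ^ j
      = ∑ c ∈ Finset.range (n + 1),
          (n.choose c : k) • ((rt k m ^ (j + c)) ⊗ₜ (rt k m ^ (n - c))) := by
  rw [ss, add_pow, Finset.sum_mul]
  refine Finset.sum_congr rfl fun c hc => ?_
  have : xx k m ^ c * yy k m ^ (n - c) * (n.choose c : A k m) * xx k m ^ j
      = (n.choose c : A k m) * (xx k m ^ (j + c) * yy k m ^ (n - c)) := by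
    ring
  rw [this, xy_pow_mul]
  rw [Nat.cast_smul_eq_nsmul, nsmul_eq_mul]

variable (k) in
def bA (m : ℕ) : Basis (Fin m × Fin m) k (A k m) := (bU k m).tensorProduct (bU k m)

lemma repr_tmul (m : ℕ) (u v : ℕ) (ab : Fin m × Fin m) :
    (bA k m).repr ((rt k m ^ u) ⊗ₜ (rt k m ^ v)) ab
      = (if u = (ab.1 : ℕ) then 1 else 0) * (if v = (ab.2 : ℕ) then 1 else 0) := by
  obtain ⟨a, b⟩ := ab
  rw [bA, Basis.tensorProduct_repr_tmul_apply, repr_rt_pow, repr_rt_pow]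
  simp [mul_comm]


lemma xx_mul_tmul (m : ℕ) (u v : U k m) :
    xx k m * (u ⊗ₜ v) = (rt k m * u) ⊗ₜ v := by
  simp [xx, Algebra.TensorProduct.tmul_mul_tmul]

lemma yy_mul_tmul (m : ℕ) (u v : U k m) :
    yy k m * (u ⊗ₜ v) = u ⊗ₜ (rt k m * v) := by
  simp [yy, Algebra.TensorProduct.tmul_mul_tmul]

variable (k) in
def ww (q : ℕ) : A k (q + 2) :=
  ∑ a ∈ Finset.range (q + 2),
    ((-1 : k) ^ a) • ((rt k (q + 2) ^ a) ⊗ₜ (rt k (q + 2) ^ (q + 1 - a)))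

variable (k) in
def wwF (q a : ℕ) : A k (q + 2) :=
  ((-1 : k) ^ a) • ((rt k (q + 2) ^ a) ⊗ₜ (rt k (q + 2) ^ (q + 2 - a)))

lemma ss_mul_ww (q : ℕ) : ss k (q + 2) * ww k q = 0 := by
  have key : ∀ a ∈ Finset.range (q + 2),
      ss k (q + 2) * (((-1 : k) ^ a) • ((rt k (q + 2) ^ a) ⊗ₜ (rt k (q + 2) ^ (q + 1 - a))))
        = wwF k q a - wwF k q (a + 1) := by
    intro a ha
    rw [Finset.mem_range] at ha
    have h1 : rt k (q + 2) * rt k (q + 2) ^ (q + 1 - a) = rt k (q + 2) ^ (q + 2 - a) := by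
      rw [← pow_succ']
      congr 1
      omega
    have h2 : q + 2 - (a + 1) = q + 1 - a := by omega
    have h3 : wwF k q (a + 1)
        = -(((-1 : k) ^ a) • ((rt k (q + 2) ^ (a + 1)) ⊗ₜ (rt k (q + 2) ^ (q + 1 - a)))) := by
      rw [wwF, h2, show ((-1 : k)) ^ (a + 1) = -(-1 : k) ^ a by rw [pow_succ, mul_neg_one],
        neg_smul]
    rw [mul_smul_comm, ss, add_mul, xx_mul_tmul, yy_mul_tmul, h1, ← pow_succ']
    rw [h3, sub_neg_eq_add, wwF, smul_add]
    exact add_comm _ _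
  rw [ww, Finset.mul_sum, Finset.sum_congr rfl key, Finset.sum_range_sub' (wwF k q)]
  have hz1 : wwF k q 0 = 0 := by
    rw [wwF]
    have : rt k (q + 2) ^ (q + 2 - 0) = 0 := rt_pow_of_le (by omega)
    rw [this, TensorProduct.tmul_zero, smul_zero]
  have hz2 : wwF k q (q + 2) = 0 := by
    rw [wwF]
    have : rt k (q + 2) ^ (q + 2) = 0 := rt_pow_of_le (le_refl _)
    rw [this, TensorProduct.zero_tmul, smul_zero]
  rw [hz1, hz2, sub_zero]

lemma ss_pow_p (q : ℕ) [CharP k (q + 3)] (hp : Nat.Prime (q + 3)) :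
    ss k (q + 2) ^ (q + 3) = 0 := by
  have := ss_pow_mul_xx (k := k) (q + 2) (q + 3) 0
  rw [pow_zero, mul_one] at this
  rw [this]
  refine Finset.sum_eq_zero fun c hc => ?_
  rw [Finset.mem_range] at hc
  rcases Nat.eq_zero_or_pos c with rfl | hc0
  · have : rt k (q + 2) ^ (q + 3 - 0) = 0 := rt_pow_of_le (by omega)
    rw [this, TensorProduct.tmul_zero, smul_zero]
  rcases lt_or_ge c (q + 3) with hclt | hcge
  · have : (((q + 3).choose c : k)) = 0 := by
      rw [CharP.cast_eq_zero_iff k (q + 3)]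
      exact hp.dvd_choose_self (by omega) hclt
    rw [this, zero_smul]
  · have : rt k (q + 2) ^ (0 + c) = 0 := rt_pow_of_le (by omega)
    rw [this, TensorProduct.zero_tmul, smul_zero]

lemma ss_pow_of_le (q t : ℕ) [CharP k (q + 3)] (hp : Nat.Prime (q + 3))
    (h : q + 3 ≤ t) : ss k (q + 2) ^ t = 0 := by
  rw [← Nat.sub_add_cancel h, pow_add, ss_pow_p q hp, mul_zero]

lemma coordA (q : ℕ) (j j' : Fin (q + 1)) :
    (bA k (q + 2)).coord (⟨(j : ℕ) + 1, by omega⟩, ⟨q + 1, by omega⟩)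
        (ss k (q + 2) ^ (q + 2) * xx k (q + 2) ^ (j' : ℕ))
      = if (j' : ℕ) = (j : ℕ) then (q + 2 : k) else 0 := by
  rw [ss_pow_mul_xx, map_sum]
  rw [Finset.sum_eq_single 1]
  · rw [map_smul, Basis.coord_apply, repr_tmul]
    simp only [smul_eq_mul]
    by_cases h : (j' : ℕ) = (j : ℕ)
    · simp [h, Nat.choose_one_right]
    · have h' : (j' : ℕ) + 1 ≠ (j : ℕ) + 1 := by omega
      simp [h, h']
  · intro c hc hc1
    rw [Finset.mem_range] at hc
    rw [map_smul, Basis.coord_apply, repr_tmul]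
    have : q + 2 - c ≠ q + 1 := by omega
    simp [this]
  · intro h
    exact absurd (Finset.mem_range.2 (by omega)) h

lemma coordW (q : ℕ) (j : Fin (q + 1)) :
    (bA k (q + 2)).coord (⟨(j : ℕ) + 1, by omega⟩, ⟨q + 1, by omega⟩) (ww k q) = 0 := by
  rw [ww, map_sum]
  refine Finset.sum_eq_zero fun a ha => ?_
  rw [Finset.mem_range] at ha
  rw [map_smul, Basis.coord_apply, repr_tmul]
  rcases Nat.eq_zero_or_pos a with rfl | ha0
  · simp
  · have : q + 1 - a ≠ q + 1 := by omega
    simp [this]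

lemma coord_ss_pow_mul_ww (q e : ℕ) (j : Fin (q + 1)) :
    (bA k (q + 2)).coord (⟨(j : ℕ) + 1, by omega⟩, ⟨q + 1, by omega⟩)
      (ss k (q + 2) ^ e * ww k q) = 0 := by
  cases e with
  | zero => rw [pow_zero, one_mul]; exact coordW q j
  | succ e =>
    have : ss k (q + 2) ^ (e + 1) * ww k q = 0 := by
      have h4 : ss k (q + 2) ^ (e + 1) * ww k q = ss k (q + 2) ^ e * (ss k (q + 2) * ww k q) := by
        ring
      rw [h4, ss_mul_ww, mul_zero]
    rw [this, map_zero]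

lemma coordW1 (q : ℕ) :
    (bA k (q + 2)).coord (⟨0, by omega⟩, ⟨q + 1, by omega⟩) (ww k q) = 1 := by
  rw [ww, map_sum]
  rw [Finset.sum_eq_single 0]
  · rw [map_smul, Basis.coord_apply, repr_tmul]
    simp
  · intro a ha ha0
    rw [map_smul, Basis.coord_apply, repr_tmul]
    simp [ha0]
  · intro h
    exact absurd (Finset.mem_range.2 (by omega)) h

lemma ww_ne_zero (q : ℕ) : ww k q ≠ 0 := fun h => by
  have := coordW1 (k := k) q
  rw [h, map_zero] at this
  exact zero_ne_one this

end Tensor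

section Phi

open Polynomial

variable (k) in
def Lone (q : ℕ) : U k 1 →ₐ[k] A k (q + 2) :=
  AdjoinRoot.liftAlgHom (X ^ 1) (Algebra.ofId k _) 0 (by simp)

variable (k) in
def Lp (q : ℕ) [CharP k (q + 3)] (hp : Nat.Prime (q + 3)) : U k (q + 3) →ₐ[k] A k (q + 2) :=
  AdjoinRoot.liftAlgHom (X ^ (q + 3)) (Algebra.ofId k _) (ss k (q + 2))
    (by rw [eval₂_X_pow]; exact ss_pow_p q hp)

variable (k) in
def φ (q : ℕ) [CharP k (q + 3)] (hp : Nat.Prime (q + 3)) :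
    (U k 1 × (Fin (q + 1) → U k (q + 3))) →ₗ[k] A k (q + 2) :=
  ((LinearMap.mulRight k (ww k q)).comp (Lone k q).toLinearMap).comp
      (LinearMap.fst k _ _)
    + ∑ j : Fin (q + 1),
        ((LinearMap.mulRight k (xx k (q + 2) ^ (j : ℕ))).comp (Lp k q hp).toLinearMap).comp
          ((LinearMap.proj j).comp (LinearMap.snd k _ _))

lemma φ_apply (q : ℕ) [CharP k (q + 3)] (hp : Nat.Prime (q + 3))
    (c : U k 1) (f : Fin (q + 1) → U k (q + 3)) :
    φ k q hp (c, f) = Lone k q c * ww k q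
      + ∑ j : Fin (q + 1), Lp k q hp (f j) * xx k (q + 2) ^ (j : ℕ) := by
  simp [φ, LinearMap.sum_apply]

lemma φ_intertwine (q : ℕ) [CharP k (q + 3)] (hp : Nat.Prime (q + 3))
    (n : U k 1 × (Fin (q + 1) → U k (q + 3))) :
    φ k q hp (rt k 1 * n.1, fun j => rt k (q + 3) * n.2 j)
      = ss k (q + 2) * φ k q hp n := by
  obtain ⟨c, f⟩ := n
  rw [φ_apply, φ_apply]
  have h1 : Lone k q (rt k 1 * c) = 0 := by
    rw [map_mul, rt, Lone, AdjoinRoot.liftAlgHom_root, zero_mul]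
  rw [h1, zero_mul, zero_add, mul_add]
  have h2 : ss k (q + 2) * (Lone k q c * ww k q) = 0 := by
    rw [mul_left_comm, ss_mul_ww, mul_zero]
  rw [h2, zero_add, Finset.mul_sum]
  refine Finset.sum_congr rfl fun j _ => ?_
  rw [map_mul, rt, Lp, AdjoinRoot.liftAlgHom_root, mul_assoc]

variable (k) in
def G (q : ℕ) : (Fin 1 ⊕ ((_ : Fin (q + 1)) × Fin (q + 3))) → A k (q + 2) :=
  Sum.elim (fun _ => ww k q)
    (fun ji => ss k (q + 2) ^ (ji.2 : ℕ) * xx k (q + 2) ^ (ji.1 : ℕ))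

lemma G_indep (q : ℕ) [CharP k (q + 3)] (hp : Nat.Prime (q + 3)) :
    LinearIndependent k (G k q) := by
  have hq2 : (q + 2 : k) ≠ 0 := by
    have h3 : ((q + 3 : ℕ) : k) = 0 := CharP.cast_eq_zero k (q + 3)
    have h4 : (q + 2 : k) = ((q + 3 : ℕ) : k) - 1 := by push_cast; ring
    rw [h4, h3, zero_sub]
    exact neg_ne_zero.mpr one_ne_zero
  rw [Fintype.linearIndependent_iff]
  intro g hg
  rw [Fintype.sum_sum_type] at hg
  rw [← Finset.univ_sigma_univ, Finset.sum_sigma] at hg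
  simp only [G, Sum.elim_inl, Sum.elim_inr, Fin.sum_univ_one] at hg
  -- hg : g (inl 0) • ww + ∑ j', ∑ i, g (inr ⟨j', i⟩) • (ss^i * xx^j') = 0
  have key : ∀ i₀ : ℕ, ∀ hi : i₀ < q + 3, ∀ j : Fin (q + 1),
      g (Sum.inr ⟨j, ⟨i₀, hi⟩⟩) = 0 := by
    intro i₀
    induction i₀ using Nat.strong_induction_on with
    | _ i₀ IH =>
      intro hi j
      set Λ := (bA k (q + 2)).coord (⟨(j : ℕ) + 1, by omega⟩, ⟨q + 1, by omega⟩) with hΛ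
      set e := q + 2 - i₀ with he
      have hexp : ∀ (j' : Fin (q + 1)) (i : Fin (q + 3)),
          ss k (q + 2) ^ e * (g (Sum.inr ⟨j', i⟩) • (ss k (q + 2) ^ (i : ℕ) * xx k (q + 2) ^ (j' : ℕ)))
            = g (Sum.inr ⟨j', i⟩) • (ss k (q + 2) ^ (e + (i : ℕ)) * xx k (q + 2) ^ (j' : ℕ)) := by
        intro j' i
        rw [mul_smul_comm, ← mul_assoc, ← pow_add]
      have hmain : (0 : k) = g (Sum.inr ⟨j, ⟨i₀, hi⟩⟩) * (q + 2 : k) := by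
        have h0 : Λ (ss k (q + 2) ^ e *
            (g (Sum.inl 0) • ww k q
              + ∑ j' : Fin (q + 1), ∑ i : Fin (q + 3),
                  g (Sum.inr ⟨j', i⟩) • (ss k (q + 2) ^ (i : ℕ) * xx k (q + 2) ^ (j' : ℕ)))) = 0 := by
          rw [hg, mul_zero, map_zero]
        rw [mul_add, mul_smul_comm] at h0
        rw [Finset.mul_sum] at h0
        simp only [Finset.mul_sum, hexp] at h0
        rw [map_add, map_smul, coord_ss_pow_mul_ww, smul_zero, zero_add] at h0
        rw [map_sum] at h0
        simp only [map_sum, map_smul] at h0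
        rw [← h0]
        rw [Finset.sum_eq_single j]
        · rw [Finset.sum_eq_single (⟨i₀, hi⟩ : Fin (q + 3))]
          · have hee : e + ((⟨i₀, hi⟩ : Fin (q + 3)) : ℕ) = q + 2 := by
              simp only [he]
              omega
            rw [hee, hΛ, coordA]
            simp
          · intro i _ hne
            rcases lt_trichotomy (i : ℕ) i₀ with hlt | heq | hgt
            · have := IH (i : ℕ) hlt i.isLt j
              simp only [Fin.eta] at this
              rw [this, zero_smul]
            · exact absurd (Fin.ext heq) hne
            · have hz : ss k (q + 2) ^ (e + (i : ℕ)) = 0 :=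
                ss_pow_of_le q _ hp (by omega)
              rw [hz, zero_mul, map_zero, smul_zero]
          · intro h
            exact absurd (Finset.mem_univ _) h
        · intro j' _ hne
          refine Finset.sum_eq_zero fun i _ => ?_
          rcases lt_trichotomy (i : ℕ) i₀ with hlt | heq | hgt
          · have := IH (i : ℕ) hlt i.isLt j'
            simp only [Fin.eta] at this
            rw [this, zero_smul]
          · have hee : e + (i : ℕ) = q + 2 := by omega
            rw [hee, hΛ, coordA]
            have : ((j' : ℕ) : ℕ) ≠ (j : ℕ) := fun h => hne (Fin.ext h)
            simp [this]
          · have hz : ss k (q + 2) ^ (e + (i : ℕ)) = 0 :=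
              ss_pow_of_le q _ hp (by omega)
            rw [hz, zero_mul, map_zero, smul_zero]
        · intro h
          exact absurd (Finset.mem_univ _) h
      have := hmain.symm
      rcases mul_eq_zero.mp this with h | h
      · exact h
      · exact absurd h hq2
  -- now the inl coefficient
  have hzero : ∀ (j' : Fin (q + 1)) (i : Fin (q + 3)), g (Sum.inr ⟨j', i⟩) = 0 := by
    intro j' i
    have := key (i : ℕ) i.isLt j'
    simpa [Fin.eta] using this
  rw [Finset.sum_eq_zero (fun j' _ => Finset.sum_eq_zero fun i _ => by
    rw [hzero j' i, zero_smul])] at hg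
  rw [add_zero] at hg
  have hc : g (Sum.inl 0) = 0 := by
    rcases smul_eq_zero.mp hg with h | h
    · exact h
    · exact absurd h (ww_ne_zero q)
  intro idx
  match idx with
  | Sum.inl i =>
    have : i = 0 := Subsingleton.elim _ _
    rw [this]
    exact hc
  | Sum.inr ⟨j', i⟩ => exact hzero j' i


variable (k) in
def bN (q : ℕ) : Basis (Fin 1 ⊕ ((_ : Fin (q + 1)) × Fin (q + 3))) k
    (U k 1 × (Fin (q + 1) → U k (q + 3))) :=
  (bU k 1).prod (Pi.basis fun _ => bU k (q + 3))

lemma φ_comp_bN (q : ℕ) [CharP k (q + 3)] (hp : Nat.Prime (q + 3))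
    (idx : Fin 1 ⊕ ((_ : Fin (q + 1)) × Fin (q + 3))) :
    φ k q hp (bN k q idx) = G k q idx := by
  match idx with
  | Sum.inl i =>
    have h1 : bN k q (Sum.inl i) = (bU k 1 i, 0) :=
      Prod.ext (Basis.prod_apply_inl_fst _ _ _) (Basis.prod_apply_inl_snd _ _ _)
    have h2 : bU k 1 i = 1 := by
      rw [bU_apply]
      have : (i : ℕ) = 0 := by omega
      rw [this, pow_zero]
    rw [h1, h2, φ_apply, map_one, one_mul]
    rw [Finset.sum_eq_zero fun j _ => by rw [Pi.zero_apply, map_zero, zero_mul], add_zero]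
    rfl
  | Sum.inr ⟨j, i⟩ =>
    have h1 : bN k q (Sum.inr ⟨j, i⟩) = (0, Pi.single j (bU k (q + 3) i)) :=
      Prod.ext (Basis.prod_apply_inr_fst _ _ _)
        ((Basis.prod_apply_inr_snd _ _ _).trans (Pi.basis_apply _ _))
    rw [h1, φ_apply, map_zero, zero_mul, zero_add]
    rw [Finset.sum_eq_single j]
    · rw [Pi.single_eq_same, bU_apply, map_pow]
      have : Lp k q hp (rt k (q + 3)) = ss k (q + 2) := by
        rw [rt, Lp, AdjoinRoot.liftAlgHom_root]
      rw [this]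
      rfl
    · intro j' _ hne
      rw [Pi.single_eq_of_ne hne, map_zero, zero_mul]
    · intro h
      exact absurd (Finset.mem_univ _) h

lemma φ_inj (q : ℕ) [CharP k (q + 3)] (hp : Nat.Prime (q + 3)) :
    Function.Injective (φ k q hp) := by
  have hli : LinearIndependent k (⇑(φ k q hp) ∘ ⇑(bN k q)) := by
    have he : ⇑(φ k q hp) ∘ ⇑(bN k q) = G k q :=
      funext fun idx => φ_comp_bN q hp idx
    rw [he]
    exact G_indep q hp
  rw [← LinearMap.ker_eq_bot, Submodule.eq_bot_iff]
  intro n hn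
  have h1 : Finsupp.linearCombination k (⇑(φ k q hp) ∘ ⇑(bN k q)) ((bN k q).repr n) = 0 := by
    rw [← Finsupp.apply_linearCombination, Basis.linearCombination_repr]
    exact hn
  have h2 := linearIndependent_iff.mp hli _ h1
  rw [← Basis.linearCombination_repr (bN k q) n, h2, map_zero]

lemma φ_bij (q : ℕ) [CharP k (q + 3)] (hp : Nat.Prime (q + 3)) :
    Function.Bijective (φ k q hp) := by
  haveI : FiniteDimensional k (U k 1 × (Fin (q + 1) → U k (q + 3))) :=
    Module.Finite.of_basis (bN k q)
  haveI : FiniteDimensional k (A k (q + 2)) := Module.Finite.of_basis (bA k (q + 2))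
  refine ⟨φ_inj q hp, ?_⟩
  have h1 : Module.finrank k (U k 1 × (Fin (q + 1) → U k (q + 3)))
      = Module.finrank k (A k (q + 2)) := by
    rw [Module.finrank_eq_card_basis (bN k q), Module.finrank_eq_card_basis (bA k (q + 2))]
    simp
    ring
  exact (LinearMap.injective_iff_surjective_of_finrank_eq_finrank h1).mp (φ_inj q hp)

lemma D_eq (m : ℕ) (v : A k m) :
    LinearMap.rTensor (U k m) (LinearMap.mulLeft k (rt k m)) v
      + LinearMap.lTensor (U k m) (LinearMap.mulLeft k (rt k m)) v = ss k m * v := by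
  have h : (LinearMap.rTensor (U k m) (LinearMap.mulLeft k (rt k m))
      + LinearMap.lTensor (U k m) (LinearMap.mulLeft k (rt k m)))
      = LinearMap.mulLeft k (ss k m) := by
    apply TensorProduct.ext'
    intro u v
    simp only [LinearMap.add_apply, LinearMap.rTensor_tmul, LinearMap.lTensor_tmul,
      LinearMap.mulLeft_apply, ss, xx, yy, add_mul,
      Algebra.TensorProduct.tmul_mul_tmul, one_mul]
  rw [← LinearMap.add_apply, h, LinearMap.mulLeft_apply]

theorem main (q : ℕ) (hp : Nat.Prime (q + 3)) (k : Type*) [Field k] [CharP k (q + 3)] :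
    ∃ e : (stmt15U k (q + 2) ⊗[k] stmt15U k (q + 2)) ≃ₗ[k]
          (stmt15U k 1 × (Fin (q + 1) → stmt15U k (q + 3))),
      ∀ v : stmt15U k (q + 2) ⊗[k] stmt15U k (q + 2),
        e (LinearMap.rTensor (stmt15U k (q + 2)) (stmt15mulX k (q + 2)) v
            + LinearMap.lTensor (stmt15U k (q + 2)) (stmt15mulX k (q + 2)) v)
          = (stmt15mulX k 1 (e v).1, fun j => stmt15mulX k (q + 3) ((e v).2 j)) := by
  show ∃ e : (A k (q + 2)) ≃ₗ[k] (U k 1 × (Fin (q + 1) → U k (q + 3))),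
      ∀ v : A k (q + 2),
        e (LinearMap.rTensor (U k (q + 2)) (LinearMap.mulLeft k (rt k (q + 2))) v
            + LinearMap.lTensor (U k (q + 2)) (LinearMap.mulLeft k (rt k (q + 2))) v)
          = (LinearMap.mulLeft k (rt k 1) (e v).1,
              fun j => LinearMap.mulLeft k (rt k (q + 3)) ((e v).2 j))
  set E := LinearEquiv.ofBijective (φ k q hp) (φ_bij q hp) with hE
  refine ⟨E.symm, fun v => ?_⟩
  have hco : ⇑E = ⇑(φ k q hp) := rfl
  have hv : φ k q hp (E.symm v) = v := by
    rw [← hco]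
    exact E.apply_symm_apply v
  rw [D_eq (q + 2) v]
  have key := φ_intertwine q hp (E.symm v)
  calc E.symm (ss k (q + 2) * v)
      = E.symm (ss k (q + 2) * φ k q hp (E.symm v)) := by rw [hv]
    _ = E.symm (φ k q hp (rt k 1 * (E.symm v).1, fun j => rt k (q + 3) * (E.symm v).2 j)) := by
        rw [key]
    _ = (rt k 1 * (E.symm v).1, fun j => rt k (q + 3) * (E.symm v).2 j) := by
        rw [← hco, E.symm_apply_apply]
    _ = (LinearMap.mulLeft k (rt k 1) (E.symm v).1,
          fun j => LinearMap.mulLeft k (rt k (q + 3)) ((E.symm v).2 j)) := rfl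

end Phi

end S15

end S15Aux

/-- for `p` an odd prime and `k` of characteristic `p`, there is an
isomorphism of `H = k[∂]/(∂^p)`-modules
`U_{p−2} ⊗ U_{p−2} ≅ U_0 ⊕ U_{p−1}^{⊕(p−2)}`,
where `∂` acts on the tensor product by `∂⊗1 + 1⊗∂`.  An `H`-module isomorphism is a
`k`-linear isomorphism intertwining the actions of `∂`. -/
theorem stmt_15 (p : ℕ) (hp : p.Prime) (hodd : Odd p) (k : Type*) [Field k] [CharP k p] :
    ∃ e : (stmt15U k (p - 1) ⊗[k] stmt15U k (p - 1)) ≃ₗ[k]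
          (stmt15U k 1 × (Fin (p - 2) → stmt15U k p)),
      ∀ v : stmt15U k (p - 1) ⊗[k] stmt15U k (p - 1),
        e (LinearMap.rTensor (stmt15U k (p - 1)) (stmt15mulX k (p - 1)) v
            + LinearMap.lTensor (stmt15U k (p - 1)) (stmt15mulX k (p - 1)) v)
          = (stmt15mulX k 1 (e v).1, fun j => stmt15mulX k p ((e v).2 j)) := by
  obtain ⟨q, rfl⟩ : ∃ q, p = q + 3 := by
    refine ⟨p - 3, ?_⟩
    obtain ⟨t, ht⟩ := hodd
    have := hp.two_le
    omega
  exact S15.main q hp k
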